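/- Let R be a ring and let n, m be positive natural numbers. If f : Matrix (Fin n) (Fin m) R → Matrix (Fin n) (Fin m) R is an additive map satisfying f(A·V) = A·f(V) for every A ∈ Matrix (Fin n) (Fin n) R and f(V·B) = f(V)·B for every B ∈ Matrix (Fin m) (Fin m) R (for all V), then there exists an element c of the center of R such that f(V) is the entrywise product c·V (i.e. (f V) i j = c · V i j) for all V; moreover, f is bijective if and only if this c is a unit of R. -/

import Mathlib

open Matrix

lemma aux_lmul {R : Type*} [Ring R] {n m : ℕ} (i0 i : Fin n) (c : R)
    (M : Matrix (Fin n) (Fin m) R) (b : Fin m) :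
    (Matrix.single i0 i c * M) i0 b = c * M i b := by
  simp [Matrix.mul_apply, Matrix.single]

lemma aux_rmul {R : Type*} [Ring R] {n m : ℕ} (j j0 : Fin m) (c : R)
    (M : Matrix (Fin n) (Fin m) R) (a : Fin n) :
    (M * Matrix.single j j0 c) a j0 = M a j * c := by
  simp [Matrix.mul_apply, Matrix.single]

lemma aux_sandwich {R : Type*} [Ring R] {n m : ℕ} (i0 i : Fin n) (j j0 : Fin m)
    (V : Matrix (Fin n) (Fin m) R) :
    Matrix.single i0 i (1 : R) * V * Matrix.single j j0 (1 : R)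
      = Matrix.single i0 j0 (V i j) := by
  ext p q
  rcases eq_or_ne p i0 with rfl | hp
  · rcases eq_or_ne q j0 with rfl | hq
    · rw [aux_rmul, aux_lmul, one_mul, mul_one, Matrix.single_apply_same]
    · simp [Matrix.mul_apply, Matrix.single, hq, Ne.symm hq]
  · simp [Matrix.mul_apply, Matrix.single, hp, Ne.symm hp]

/-- Bimodule endomorphisms of the bimodule of rectangular matrices are
multiplications by central elements, and bijective ones correspond to units. -/
theorem matrix_bimodule_endo_is_central_scalar {R : Type*} [Ring R] (n m : ℕ)
    (hn : 0 < n) (hm : 0 < m)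
    (f : Matrix (Fin n) (Fin m) R → Matrix (Fin n) (Fin m) R)
    (hadd : ∀ V W : Matrix (Fin n) (Fin m) R, f (V + W) = f V + f W)
    (hleft : ∀ (A : Matrix (Fin n) (Fin n) R) (V : Matrix (Fin n) (Fin m) R),
      f (A * V) = A * f V)
    (hright : ∀ (V : Matrix (Fin n) (Fin m) R) (B : Matrix (Fin m) (Fin m) R),
      f (V * B) = f V * B) :
    ∃ c ∈ Set.center R,
      (∀ (V : Matrix (Fin n) (Fin m) R) (i : Fin n) (j : Fin m), f V i j = c * V i j) ∧
      (Function.Bijective f ↔ IsUnit c) := by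
  set i0 : Fin n := ⟨0, hn⟩
  set j0 : Fin m := ⟨0, hm⟩
  set g : R → R := fun r => f (Matrix.single i0 j0 r) i0 j0 with hg
  -- f V i j = g (V i j)
  have key : ∀ (V : Matrix (Fin n) (Fin m) R) (i : Fin n) (j : Fin m),
      f V i j = g (V i j) := by
    intro V i j
    have h1 : Matrix.single i0 i (1 : R) * V * Matrix.single j j0 (1 : R)
        = Matrix.single i0 j0 (V i j) := aux_sandwich i0 i j j0 V
    have h2 := congrArg (fun M => M i0 j0)
      (by rw [hright, hleft] :
        f (Matrix.single i0 i (1 : R) * V * Matrix.single j j0 (1 : R))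
          = Matrix.single i0 i (1 : R) * f V * Matrix.single j j0 (1 : R))
    beta_reduce at h2
    rw [h1] at h2
    rw [hg]
    simp only
    rw [h2, aux_rmul, aux_lmul, one_mul, mul_one]
  have gl : ∀ r s : R, g (r * s) = r * g s := by
    intro r s
    have : Matrix.single i0 j0 (r * s)
        = Matrix.single i0 i0 r * Matrix.single i0 j0 s := by
      ext p q
      rcases eq_or_ne p i0 with rfl | hp
      · rcases eq_or_ne q j0 with rfl | hq
        · rw [aux_lmul]; simp
        · simp [Matrix.single, Matrix.mul_apply, hq, Ne.symm hq]
      · simp [Matrix.single, Matrix.mul_apply, hp, Ne.symm hp]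
    rw [hg]
    simp only
    rw [this, hleft, aux_lmul]
  have gr : ∀ r s : R, g (r * s) = g r * s := by
    intro r s
    have : Matrix.single i0 j0 (r * s)
        = Matrix.single i0 j0 r * Matrix.single j0 j0 s := by
      ext p q
      rcases eq_or_ne p i0 with rfl | hp
      · rcases eq_or_ne q j0 with rfl | hq
        · rw [aux_rmul]; simp
        · simp [Matrix.single, Matrix.mul_apply, hq, Ne.symm hq]
      · simp [Matrix.single, Matrix.mul_apply, hp, Ne.symm hp]
    rw [hg]
    simp only
    rw [this, hright, aux_rmul]
  set c : R := g 1 with hc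
  have gval : ∀ r : R, g r = c * r := by
    intro r
    have h2 := gr 1 r
    rw [one_mul] at h2
    rw [h2, hc]
  have hcomm : ∀ r : R, c * r = r * c := by
    intro r
    have h1 := gl r 1; rw [mul_one] at h1
    have h2 := gr 1 r; rw [one_mul] at h2
    rw [← h1, h2]
  have hcen : c ∈ Set.center R := by
    rw [Semigroup.mem_center_iff]
    intro r
    exact (hcomm r).symm
  have fval : ∀ (V : Matrix (Fin n) (Fin m) R) (i : Fin n) (j : Fin m),
      f V i j = c * V i j := fun V i j => (key V i j).trans (gval _)
  refine ⟨c, hcen, fval, ?_⟩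
  have fsmul : ∀ V, f V = c • V := by
    intro V; ext i j; rw [fval]; rfl
  constructor
  · rintro ⟨_, hsurj⟩
    obtain ⟨W, hW⟩ := hsurj (Matrix.single i0 j0 (1 : R))
    have h1 : c * W i0 j0 = 1 := by
      have := congrArg (fun M => M i0 j0) hW
      beta_reduce at this
      rw [fval] at this
      simpa using this
    exact ⟨⟨c, W i0 j0, h1, by rw [← hcomm]; exact h1⟩, rfl⟩
  · rintro ⟨u, hu⟩
    have inv : Function.LeftInverse (fun V : Matrix (Fin n) (Fin m) R => (↑u⁻¹ : R) • V) f
        ∧ Function.RightInverse (fun V : Matrix (Fin n) (Fin m) R => (↑u⁻¹ : R) • V) f := by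
      constructor <;> intro V <;> ext i j <;>
        simp [fsmul, Matrix.smul_apply, ← hu, ← mul_assoc]
    exact ⟨inv.1.injective, inv.2.surjective⟩
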